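/- Let L be a complete modular lattice and 𝔪 a submonoid with zero of End_lin(L) that is closed under complements, and suppose L is 𝔪-endoregular. The following are equivalent: (a) any two idempotent elements of 𝔪 commute; (b) C(L) is a Boolean lattice, that is: C(L) is closed under the meet and join of L, and the bounded lattice C(L) is distributive (and every element of C(L) has a complement in C(L)). -/
import Mathlib


section Preamble

variable {α β : Type*}

/-- A linear morphism between complete lattices: there is a kernel element `k` such that
`φ x = φ (x ⊔ k)` for all `x`, and `φ` restricts to an isomorphism of (complete) lattices
from the interval `[k, ⊤]` onto `[⊥, φ ⊤]`. -/
def IsLinMor [CompleteLattice α] [CompleteLattice β] (φ : α → β) : Prop :=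
  ∃ k : α, (∀ x, φ x = φ (x ⊔ k)) ∧
    ∃ e : Set.Icc k (⊤ : α) ≃o Set.Icc (⊥ : β) (φ ⊤),
      ∀ x : Set.Icc k (⊤ : α), (e x : β) = φ (x : α)

/-- The kernel of a linear morphism: the largest element sent to `⊥`. -/
noncomputable def linKer [CompleteLattice α] [CompleteLattice β] (φ : α → β) : α :=
  sSup {a | φ a = ⊥}

/-- A submonoid with zero of the monoid of linear endomorphisms of `α`. -/
structure IsLinSubmonoid [CompleteLattice α] (M : Set (α → α)) : Prop where
  lin_mem : ∀ φ ∈ M, IsLinMor φ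
  id_mem : (id : α → α) ∈ M
  zero_mem : (fun _ : α => (⊥ : α)) ∈ M
  comp_mem : ∀ φ ∈ M, ∀ ψ ∈ M, φ ∘ ψ ∈ M

/-- The projection onto `x` along a complement `x'`. -/
def proj [CompleteLattice α] (x x' : α) : α → α := fun a => (a ⊔ x') ⊓ x

/-- `M` is closed under complements: whenever `φ ∈ M` restricts to a linear isomorphism
`[⊥, x] → [⊥, y]` with `x, y` complemented, the composite `ι_x ∘ (φ|_x)⁻¹ ∘ π_y` is in `M`. -/
def ClosedUnderComplements [CompleteLattice α] (M : Set (α → α)) : Prop :=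
  ∀ φ ∈ M, ∀ x x' y y' : α, IsCompl x x' → IsCompl y y' →
    ∀ e : Set.Icc (⊥ : α) x ≃o Set.Icc (⊥ : α) y,
      (∀ a : Set.Icc (⊥ : α) x, ((e a : Set.Icc (⊥ : α) y) : α) = φ (a : α)) →
      (fun a : α =>
        ((e.symm ⟨(a ⊔ y') ⊓ y, bot_le, inf_le_right⟩ : Set.Icc (⊥ : α) x) : α)) ∈ M

/-- `L` is `M`-endoregular: `M` is a regular monoid. -/
def MEndoregular [CompleteLattice α] (M : Set (α → α)) : Prop :=
  ∀ φ ∈ M, ∃ ψ ∈ M, φ ∘ ψ ∘ φ = φ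

/-- `L` is `M`-Rickart: kernels of members of `M` have complements. -/
def MRickart [CompleteLattice α] (M : Set (α → α)) : Prop :=
  ∀ φ ∈ M, ∃ y, IsCompl (linKer φ) y

/-- `L` is dual-`M`-Rickart: images of members of `M` have complements. -/
def MDualRickart [CompleteLattice α] (M : Set (α → α)) : Prop :=
  ∀ φ ∈ M, ∃ y, IsCompl (φ ⊤) y

/-- The `M`-C2 condition. -/
def MC2 [CompleteLattice α] (M : Set (α → α)) : Prop :=
  ∀ a x x' : α, IsCompl x x' →
    ∀ e : Set.Icc (⊥ : α) x ≃o Set.Icc (⊥ : α) a,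
      ((fun b : α =>
          ((e ⟨(b ⊔ x') ⊓ x, bot_le, inf_le_right⟩ : Set.Icc (⊥ : α) a) : α)) ∈ M) →
      ∃ a', IsCompl a a'

/-- The `M`-D2 condition. -/
def MD2 [CompleteLattice α] (M : Set (α → α)) : Prop :=
  ∀ a x : α, (∃ x', IsCompl x x') →
    ∀ e : Set.Icc a (⊤ : α) ≃o Set.Icc (⊥ : α) x,
      ((fun b : α => ((e ⟨a ⊔ b, le_sup_left, le_top⟩ : Set.Icc (⊥ : α) x) : α)) ∈ M) →
      ∃ a', IsCompl a a'

/-- `L` is `M`-abelian: every idempotent of `M` is central in `M`. -/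
def MAbelian [CompleteLattice α] (M : Set (α → α)) : Prop :=
  ∀ ε ∈ M, ε ∘ ε = ε → ∀ φ ∈ M, ε ∘ φ = φ ∘ ε

/-- `a` is `M`-`L`-generated: it is a join of images of linear morphisms `L → [⊥, a]`
whose composites with the inclusion `ι_a` lie in `M`. -/
def MGenerated [CompleteLattice α] (M : Set (α → α)) (a : α) : Prop :=
  ∃ S : Set (α → α), S ⊆ M ∧ (∀ f ∈ S, ∀ x, f x ≤ a) ∧ (⨆ f ∈ S, f ⊤) = a

/-- A complete lattice is compact if every join representation of `⊤` has a finite subjoin. -/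
def CompactLat (α : Type*) [CompleteLattice α] : Prop :=
  ∀ s : Set α, sSup s = ⊤ → ∃ t : Finset α, ↑t ⊆ s ∧ sSup (↑t : Set α) = ⊤

/-- An element `c` is compact if the interval `[⊥, c]` is a compact lattice. -/
def CompactElt [CompleteLattice α] (c : α) : Prop :=
  ∀ s : Set α, (∀ a ∈ s, a ≤ c) → sSup s = c →
    ∃ t : Finset α, ↑t ⊆ s ∧ sSup (↑t : Set α) = c

/-- `x` is essential in `L`. -/
def Essential [CompleteLattice α] (x : α) : Prop := ∀ y, x ⊓ y = ⊥ → y = ⊥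

/-- `x` is essential in the interval `[⊥, c]`. -/
def EssentialIn [CompleteLattice α] (x c : α) : Prop :=
  x ≤ c ∧ ∀ y ≤ c, x ⊓ y = ⊥ → y = ⊥

/-- `x` is superfluous in `L`. -/
def Superfluous [CompleteLattice α] (x : α) : Prop := ∀ y, x ⊔ y = ⊤ → y = ⊤

/-- `x` is superfluous in the interval `[⊥, c]`. -/
def SuperfluousIn [CompleteLattice α] (x c : α) : Prop :=
  x ≤ c ∧ ∀ y ≤ c, x ⊔ y = c → y = c

/-- `M` contains all the projections. -/
def ContainsProjections [CompleteLattice α] (M : Set (α → α)) : Prop :=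
  ∀ x x' : α, IsCompl x x' → proj x x' ∈ M

/-- `L` is `M`-K-extending. -/
def MKExtending [CompleteLattice α] (M : Set (α → α)) : Prop :=
  ∀ φ ∈ M, ∃ c : α, (∃ c', IsCompl c c') ∧ EssentialIn (linKer φ) c

/-- `L` is `M`-K-nonsingular. -/
def MKNonsingular [CompleteLattice α] (M : Set (α → α)) : Prop :=
  ∀ φ ∈ M, Essential (linKer φ) → φ = fun _ => (⊥ : α)

/-- `L` is `M`-T-lifting. -/
def MTLifting [CompleteLattice α] (M : Set (α → α)) : Prop :=
  ∀ φ ∈ M, ∃ c c' : α, IsCompl c c' ∧ c ≤ φ ⊤ ∧ SuperfluousIn (φ ⊤ ⊓ c') c'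

end Preamble


section AuxProofs

variable {α : Type*} [CompleteLattice α]

lemma linmor_props {φ : α → α} (h : IsLinMor φ) :
    (∀ a, φ a = ⊥ ↔ a ≤ linKer φ) ∧
    (∀ a b, linKer φ ≤ a → linKer φ ≤ b → φ a = φ b → a = b) ∧
    (∀ a, φ (a ⊔ linKer φ) = φ a) ∧
    (∀ c, c ≤ φ ⊤ → ∃ z, φ z = c) := by
  obtain ⟨k, hk, e, he⟩ := h
  have hφk : φ k = ⊥ := by
    have h1 := he ⟨k, le_rfl, le_top⟩
    set z := e.symm ⟨⊥, le_rfl, bot_le⟩ with hz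
    have h2 : e z = ⟨⊥, le_rfl, bot_le⟩ := e.apply_symm_apply _
    have h3 : (⟨k, le_rfl, le_top⟩ : Set.Icc k (⊤:α)) ≤ z := Subtype.coe_le_coe.1 z.2.1
    have h4 := e.monotone h3
    rw [h2] at h4
    have h5 : ((e ⟨k, le_rfl, le_top⟩ : Set.Icc (⊥:α) (φ ⊤)) : α) ≤ ⊥ := h4
    rw [h1] at h5
    exact le_bot_iff.mp h5
  have hiff : ∀ a, φ a = ⊥ ↔ a ≤ k := by
    intro a
    constructor
    · intro ha
      have h1 : φ (a ⊔ k) = φ k := by rw [← hk a, ha, hφk]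
      have h2 : ((e ⟨a ⊔ k, le_sup_right, le_top⟩ : Set.Icc (⊥:α) (φ ⊤)) : α)
          = ((e ⟨k, le_rfl, le_top⟩ : Set.Icc (⊥:α) (φ ⊤)) : α) := by
        rw [he ⟨a ⊔ k, le_sup_right, le_top⟩, he ⟨k, le_rfl, le_top⟩]; exact h1
      have h3 := e.injective (Subtype.ext h2)
      have h4 : a ⊔ k = k := congrArg Subtype.val h3
      exact sup_eq_right.mp h4
    · intro ha
      rw [hk a, sup_eq_right.mpr ha, hφk]
  have hset : {a : α | φ a = ⊥} = Set.Iic k := Set.ext fun a => by simpa using hiff a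
  have hlk : linKer φ = k := by rw [linKer, hset, csSup_Iic]
  refine ⟨by simpa [hlk] using hiff, ?_, ?_, ?_⟩
  · intro a b ha hb hab
    rw [hlk] at ha hb
    have h2 : ((e ⟨a, ha, le_top⟩ : Set.Icc (⊥:α) (φ ⊤)) : α)
        = ((e ⟨b, hb, le_top⟩ : Set.Icc (⊥:α) (φ ⊤)) : α) := by
      rw [he ⟨a, ha, le_top⟩, he ⟨b, hb, le_top⟩]; exact hab
    exact congrArg Subtype.val (e.injective (Subtype.ext h2))
  · intro a; rw [hlk]; exact (hk a).symm
  · intro c hc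
    refine ⟨(e.symm ⟨c, bot_le, hc⟩ : Set.Icc k (⊤:α)), ?_⟩
    have h1 := he (e.symm ⟨c, bot_le, hc⟩)
    rw [e.apply_symm_apply] at h1
    exact h1.symm

variable [IsModularLattice α]

lemma idem_struct {ε : α → α} (h : IsLinMor ε) (hid : ε ∘ ε = ε) :
    IsCompl (linKer ε) (ε ⊤) ∧ ∀ b, ε b = (b ⊔ linKer ε) ⊓ ε ⊤ := by
  obtain ⟨hiff, hinj, hsupk, hsurj⟩ := linmor_props h
  have hfix : ∀ c, c ≤ ε ⊤ → ε c = c := by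
    intro c hc
    obtain ⟨z, hz⟩ := hsurj c hc
    calc ε c = ε (ε z) := by rw [hz]
      _ = ε z := congrFun hid z
      _ = c := hz
  have hsup : linKer ε ⊔ ε ⊤ = ⊤ := by
    have h1 : ε (linKer ε ⊔ ε ⊤) = ε ⊤ :=
      calc ε (linKer ε ⊔ ε ⊤) = ε (ε ⊤ ⊔ linKer ε) := by rw [sup_comm]
        _ = ε (ε ⊤) := hsupk _
        _ = ε ⊤ := congrFun hid ⊤
    exact hinj _ _ le_sup_left le_top h1
  have hinf : linKer ε ⊓ ε ⊤ = ⊥ := by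
    have h1 : ε (linKer ε ⊓ ε ⊤) = linKer ε ⊓ ε ⊤ := hfix _ inf_le_right
    have h2 : ε (linKer ε ⊓ ε ⊤) = ⊥ := (hiff _).mpr inf_le_left
    rw [← h1]; exact h2
  refine ⟨IsCompl.of_eq hinf hsup, fun b => ?_⟩
  have h3 : (linKer ε ⊔ ε ⊤) ⊓ (b ⊔ linKer ε) = linKer ε ⊔ (ε ⊤ ⊓ (b ⊔ linKer ε)) :=
    sup_inf_assoc_of_le (ε ⊤) le_sup_right
  have h4 : b ⊔ linKer ε = linKer ε ⊔ (ε ⊤ ⊓ (b ⊔ linKer ε)) := by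
    rw [← h3, hsup, top_inf_eq]
  calc ε b = ε (b ⊔ linKer ε) := (hsupk b).symm
    _ = ε (linKer ε ⊔ (ε ⊤ ⊓ (b ⊔ linKer ε))) := by rw [← h4]
    _ = ε ((ε ⊤ ⊓ (b ⊔ linKer ε)) ⊔ linKer ε) := by rw [sup_comm]
    _ = ε (ε ⊤ ⊓ (b ⊔ linKer ε)) := hsupk _
    _ = ε ⊤ ⊓ (b ⊔ linKer ε) := hfix _ inf_le_left
    _ = (b ⊔ linKer ε) ⊓ ε ⊤ := inf_comm _ _

omit [IsModularLattice α] in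
lemma proj_mono (x x' : α) : Monotone (proj x x') :=
  fun _ _ h => inf_le_inf_right _ (sup_le_sup_right h _)

omit [IsModularLattice α] in
lemma proj_le (x x' : α) (b : α) : proj x x' b ≤ x := inf_le_right

lemma proj_fix {x x' : α} (hx : IsCompl x x') {c : α} (hc : c ≤ x) : proj x x' c = c := by
  show (c ⊔ x') ⊓ x = c
  rw [sup_inf_assoc_of_le x' hc, hx.symm.inf_eq_bot, sup_bot_eq]

lemma proj_idem {x x' : α} (hx : IsCompl x x') : proj x x' ∘ proj x x' = proj x x' :=
  funext fun b => proj_fix hx (proj_le x x' b)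

lemma proj_ker {x x' : α} (hx : IsCompl x x') (b : α) : proj x x' b = ⊥ ↔ b ≤ x' := by
  show (b ⊔ x') ⊓ x = ⊥ ↔ b ≤ x'
  constructor
  · intro hb
    have h1 : (x' ⊔ x) ⊓ (b ⊔ x') = x' ⊔ (x ⊓ (b ⊔ x')) := sup_inf_assoc_of_le x le_sup_right
    have h2 : x' ⊔ x = ⊤ := by rw [sup_comm]; exact hx.sup_eq_top
    rw [h2, top_inf_eq, inf_comm x (b ⊔ x'), hb, sup_bot_eq] at h1
    calc b ≤ b ⊔ x' := le_sup_left
      _ = x' := h1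
  · intro hb
    rw [sup_eq_right.mpr hb, hx.symm.inf_eq_bot]

lemma proj_bot {x x' : α} (hx : IsCompl x x') : proj x x' ⊥ = ⊥ :=
  (proj_ker hx ⊥).mpr bot_le

omit [IsModularLattice α] in
lemma proj_mem {M : Set (α → α)} (hM : IsLinSubmonoid M) (hcc : ClosedUnderComplements M)
    {x x' : α} (hx : IsCompl x x') : proj x x' ∈ M :=
  hcc id hM.id_mem x x' x x' hx hx (OrderIso.refl _) (fun _ => rfl)

lemma comm_pair {M : Set (α → α)} (hM : IsLinSubmonoid M)
    {x x' y y' : α} (hx : IsCompl x x') (hy : IsCompl y y')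
    (hpx : proj x x' ∈ M) (hpy : proj y y' ∈ M)
    (hcomm : proj x x' ∘ proj y y' = proj y y' ∘ proj x x') :
    IsCompl (x ⊓ y) (x' ⊔ y') ∧ (y ⊔ x') ⊓ x = x ⊓ y := by
  set ε := proj x x' ∘ proj y y' with hε
  have hmem : ε ∈ M := hM.comp_mem _ hpx _ hpy
  have hc : ∀ b, proj x x' (proj y y' b) = proj y y' (proj x x' b) := fun b => congrFun hcomm b
  have hidem : ε ∘ ε = ε := by
    funext b
    show proj x x' (proj y y' (proj x x' (proj y y' b))) = proj x x' (proj y y' b)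
    rw [← hc (proj y y' b)]
    rw [proj_fix hx (proj_le x x' _)]
    rw [proj_fix hy (proj_le y y' b)]
  obtain ⟨hcompl, hform⟩ := idem_struct (hM.lin_mem ε hmem) hidem
  obtain ⟨hiff, hinj, hsupk, hsurj⟩ := linmor_props (hM.lin_mem ε hmem)
  have htop1 : ε ⊤ = (y ⊔ x') ⊓ x := by
    show proj x x' (proj y y' ⊤) = _
    have h0 : proj y y' ⊤ = y := by show (⊤ ⊔ y') ⊓ y = y; rw [top_sup_eq, top_inf_eq]
    rw [h0]; rfl
  have htop : ε ⊤ = x ⊓ y := by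
    refine le_antisymm (le_inf ?_ ?_) ?_
    · rw [htop1]; exact inf_le_right
    · have h2 : ε ⊤ = proj y y' (proj x x' ⊤) := hc ⊤
      rw [h2]; exact proj_le _ _ _
    · have h3 : ε (x ⊓ y) = x ⊓ y := by
        show proj x x' (proj y y' (x ⊓ y)) = x ⊓ y
        rw [proj_fix hy inf_le_right, proj_fix hx inf_le_left]
      calc x ⊓ y = ε (x ⊓ y) := h3.symm
        _ ≤ ε ⊤ := (proj_mono x x').comp (proj_mono y y') le_top
  have hker : linKer ε = x' ⊔ y' := by
    have hx'mem : ε x' = ⊥ := by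
      have h0 : ε x' = proj y y' (proj x x' x') := hc x'
      rw [h0, (proj_ker hx x').mpr le_rfl, proj_bot hy]
    have hy'mem : ε y' = ⊥ := by
      show proj x x' (proj y y' y') = ⊥
      rw [(proj_ker hy y').mpr le_rfl, proj_bot hx]
    have le1 : x' ⊔ y' ≤ linKer ε := sup_le ((hiff x').mp hx'mem) ((hiff y').mp hy'mem)
    have le2 : linKer ε ≤ x' ⊔ y' := by
      have hkbot : ε (linKer ε) = ⊥ := (hiff _).mpr le_rfl
      have h5 : proj y y' (proj x x' (linKer ε)) = ⊥ := by rw [← hc]; exact hkbot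
      have h6 : proj x x' (linKer ε) ≤ y' := (proj_ker hy _).mp h5
      have h7 : (x' ⊔ x) ⊓ (linKer ε ⊔ x') = x' ⊔ (x ⊓ (linKer ε ⊔ x')) :=
        sup_inf_assoc_of_le x le_sup_right
      have h8 : x' ⊔ x = ⊤ := by rw [sup_comm]; exact hx.sup_eq_top
      rw [h8, top_inf_eq] at h7
      have h9 : x ⊓ (linKer ε ⊔ x') ≤ y' := by
        rw [inf_comm]; exact h6
      calc linKer ε ≤ linKer ε ⊔ x' := le_sup_left
        _ = x' ⊔ (x ⊓ (linKer ε ⊔ x')) := h7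
        _ ≤ x' ⊔ y' := sup_le_sup_left h9 x'
    exact le_antisymm le2 le1
  constructor
  · rw [hker, htop] at hcompl
    exact hcompl.symm
  · rw [← htop1, htop]

lemma comp_idem {ε δ : α → α}
    (hcε : IsCompl (linKer ε) (ε ⊤)) (hfε : ∀ b, ε b = (b ⊔ linKer ε) ⊓ ε ⊤)
    (hcδ : IsCompl (linKer δ) (δ ⊤)) (hfδ : ∀ b, δ b = (b ⊔ linKer δ) ⊓ δ ⊤)
    (hd1 : (δ ⊤ ⊔ linKer ε) ⊓ ε ⊤ = ε ⊤ ⊓ δ ⊤) :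
    (ε ∘ δ) ∘ (ε ∘ δ) = ε ∘ δ ∧ (ε ∘ δ) ⊤ = ε ⊤ ⊓ δ ⊤ := by
  have hfixε : ∀ c, c ≤ ε ⊤ → ε c = c := fun c hc => by
    rw [hfε c, sup_inf_assoc_of_le _ hc, hcε.inf_eq_bot, sup_bot_eq]
  have hfixδ : ∀ c, c ≤ δ ⊤ → δ c = c := fun c hc => by
    rw [hfδ c, sup_inf_assoc_of_le _ hc, hcδ.inf_eq_bot, sup_bot_eq]
  have hble : ∀ b, ε (δ b) ≤ ε ⊤ ⊓ δ ⊤ := by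
    intro b
    have h1 : δ b ≤ δ ⊤ := by rw [hfδ b]; exact inf_le_right
    calc ε (δ b) = (δ b ⊔ linKer ε) ⊓ ε ⊤ := hfε _
      _ ≤ (δ ⊤ ⊔ linKer ε) ⊓ ε ⊤ := inf_le_inf_right _ (sup_le_sup_right h1 _)
      _ = ε ⊤ ⊓ δ ⊤ := hd1
  have hfix2 : ∀ c, c ≤ ε ⊤ ⊓ δ ⊤ → ε (δ c) = c := by
    intro c hc
    rw [hfixδ c (le_trans hc inf_le_right), hfixε c (le_trans hc inf_le_left)]
  constructor
  · funext b
    show ε (δ (ε (δ b))) = ε (δ b)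
    exact hfix2 _ (hble b)
  · show ε (δ ⊤) = ε ⊤ ⊓ δ ⊤
    have h0 : δ ⊤ ≤ δ ⊤ := le_rfl
    calc ε (δ ⊤) = (δ ⊤ ⊔ linKer ε) ⊓ ε ⊤ := hfε _
      _ = ε ⊤ ⊓ δ ⊤ := hd1

end AuxProofs

/-- If `L` is `M`-endoregular, then any two idempotents of `M` commute iff
the set `C(L)` of complemented elements is a Boolean lattice: closed under meet and join,
distributive, and every element of `C(L)` has a complement lying in `C(L)`. -/
theorem stmt_11 {α : Type*} [CompleteLattice α] [IsModularLattice α]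
    (M : Set (α → α)) (hM : IsLinSubmonoid M) (hcc : ClosedUnderComplements M)
    (hreg : MEndoregular M) :
    (∀ ε ∈ M, ε ∘ ε = ε → ∀ δ ∈ M, δ ∘ δ = δ → ε ∘ δ = δ ∘ ε) ↔
      ((∀ x : α, (∃ x', IsCompl x x') → ∀ y : α, (∃ y', IsCompl y y') →
          (∃ z, IsCompl (x ⊓ y) z) ∧ (∃ z, IsCompl (x ⊔ y) z)) ∧
       (∀ x : α, (∃ x', IsCompl x x') → ∀ y : α, (∃ y', IsCompl y y') →
          ∀ z : α, (∃ z', IsCompl z z') → x ⊓ (y ⊔ z) = (x ⊓ y) ⊔ (x ⊓ z)) ∧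
       (∀ x : α, (∃ x', IsCompl x x') → ∃ y, (∃ y', IsCompl y y') ∧ IsCompl x y)) := by
  constructor
  · -- idempotents commute → C(L) Boolean
    intro h
    have key : ∀ {x x' y y' : α}, IsCompl x x' → IsCompl y y' →
        IsCompl (x ⊓ y) (x' ⊔ y') ∧ (y ⊔ x') ⊓ x = x ⊓ y := by
      intro x x' y y' hx hy
      have hpx := proj_mem hM hcc hx
      have hpy := proj_mem hM hcc hy
      exact comm_pair hM hx hy hpx hpy (h _ hpx (proj_idem hx) _ hpy (proj_idem hy))
    have hsplit : ∀ {a a' x x' : α}, IsCompl a a' → IsCompl x x' →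
        a = (a ⊓ x) ⊔ (a ⊓ x') := by
      intro a a' x x' ha hx
      have hu : IsCompl (a ⊓ x) (a' ⊔ x') := (key ha hx).1
      have hv : IsCompl (a ⊓ x') (a' ⊔ x) := (key ha hx.symm).1
      have hT : IsCompl ((a' ⊔ x') ⊓ (a' ⊔ x)) ((a ⊓ x) ⊔ (a ⊓ x')) :=
        (key hu.symm hv.symm).1
      have ht : (a ⊓ x) ⊔ (a ⊓ x') ≤ a := sup_le inf_le_left inf_le_left
      have h1 : (((a ⊓ x) ⊔ (a ⊓ x')) ⊔ ((a' ⊔ x') ⊓ (a' ⊔ x))) ⊓ a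
          = ((a ⊓ x) ⊔ (a ⊓ x')) ⊔ (((a' ⊔ x') ⊓ (a' ⊔ x)) ⊓ a) :=
        sup_inf_assoc_of_le _ ht
      have h2 : ((a' ⊔ x') ⊓ (a' ⊔ x)) ⊓ a = ⊥ :=
        calc ((a' ⊔ x') ⊓ (a' ⊔ x)) ⊓ a = (a' ⊔ x') ⊓ ((a' ⊔ x) ⊓ a) := inf_assoc _ _ _
          _ = (a' ⊔ x') ⊓ (a ⊓ x) := by rw [sup_comm a' x, (key ha hx).2]
          _ = (a ⊓ x) ⊓ (a' ⊔ x') := inf_comm _ _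
          _ = ⊥ := hu.inf_eq_bot
      calc a = ⊤ ⊓ a := by rw [top_inf_eq]
        _ = (((a ⊓ x) ⊔ (a ⊓ x')) ⊔ ((a' ⊔ x') ⊓ (a' ⊔ x))) ⊓ a := by
            rw [hT.symm.sup_eq_top]
        _ = ((a ⊓ x) ⊔ (a ⊓ x')) ⊔ (((a' ⊔ x') ⊓ (a' ⊔ x)) ⊓ a) := h1
        _ = (a ⊓ x) ⊔ (a ⊓ x') := by rw [h2, sup_bot_eq]
    refine ⟨?_, ?_, ?_⟩
    · rintro x ⟨x', hx⟩ y ⟨y', hy⟩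
      exact ⟨⟨x' ⊔ y', (key hx hy).1⟩, ⟨x' ⊓ y', ((key hx.symm hy.symm).1).symm⟩⟩
    · rintro x ⟨x', hx⟩ y ⟨y', hy⟩ z ⟨z', hz⟩
      have hy2 : y = (y ⊓ x) ⊔ (y ⊓ x') := hsplit hy hx
      have hz2 : z = (z ⊓ x) ⊔ (z ⊓ x') := hsplit hz hx
      have hyz : ((y ⊓ x) ⊔ (y ⊓ x')) ⊔ ((z ⊓ x) ⊔ (z ⊓ x'))
          = ((y ⊓ x) ⊔ (z ⊓ x)) ⊔ ((y ⊓ x') ⊔ (z ⊓ x')) := by ac_rfl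
      have hple : (y ⊓ x) ⊔ (z ⊓ x) ≤ x := sup_le inf_le_right inf_le_right
      have hqle : (y ⊓ x') ⊔ (z ⊓ x') ≤ x' := sup_le inf_le_right inf_le_right
      have h1 : (((y ⊓ x) ⊔ (z ⊓ x)) ⊔ ((y ⊓ x') ⊔ (z ⊓ x'))) ⊓ x
          = ((y ⊓ x) ⊔ (z ⊓ x)) ⊔ (((y ⊓ x') ⊔ (z ⊓ x')) ⊓ x) :=
        sup_inf_assoc_of_le _ hple
      have h2 : ((y ⊓ x') ⊔ (z ⊓ x')) ⊓ x = ⊥ := by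
        refine le_bot_iff.mp ?_
        calc ((y ⊓ x') ⊔ (z ⊓ x')) ⊓ x ≤ x' ⊓ x := inf_le_inf_right x hqle
          _ = ⊥ := hx.symm.inf_eq_bot
      calc x ⊓ (y ⊔ z)
          = (((y ⊓ x) ⊔ (y ⊓ x')) ⊔ ((z ⊓ x) ⊔ (z ⊓ x'))) ⊓ x := by
            rw [inf_comm, ← hy2, ← hz2]
        _ = (((y ⊓ x) ⊔ (z ⊓ x)) ⊔ ((y ⊓ x') ⊔ (z ⊓ x'))) ⊓ x := by rw [hyz]
        _ = ((y ⊓ x) ⊔ (z ⊓ x)) ⊔ (((y ⊓ x') ⊔ (z ⊓ x')) ⊓ x) := h1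
        _ = (y ⊓ x) ⊔ (z ⊓ x) := by rw [h2, sup_bot_eq]
        _ = (x ⊓ y) ⊔ (x ⊓ z) := by rw [inf_comm y x, inf_comm z x]
    · rintro x ⟨x', hx⟩
      exact ⟨x', ⟨x, hx.symm⟩, hx⟩
  · -- C(L) Boolean → idempotents commute
    rintro ⟨-, hdist, -⟩
    intro ε hε hεi δ hδ hδi
    obtain ⟨hcε, hfε⟩ := idem_struct (hM.lin_mem ε hε) hεi
    obtain ⟨hcδ, hfδ⟩ := idem_struct (hM.lin_mem δ hδ) hδi
    have cuniq : ∀ {c z₁ z₂ : α}, IsCompl c z₁ → IsCompl c z₂ → z₁ = z₂ := by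
      intro c z₁ z₂ h1 h2
      have e1 : z₁ = z₁ ⊓ z₂ :=
        calc z₁ = z₁ ⊓ (c ⊔ z₂) := by rw [h2.sup_eq_top, inf_top_eq]
          _ = (z₁ ⊓ c) ⊔ (z₁ ⊓ z₂) := hdist z₁ ⟨c, h1.symm⟩ c ⟨z₁, h1⟩ z₂ ⟨c, h2.symm⟩
          _ = z₁ ⊓ z₂ := by rw [h1.symm.inf_eq_bot, bot_sup_eq]
      have e2 : z₂ = z₂ ⊓ z₁ :=
        calc z₂ = z₂ ⊓ (c ⊔ z₁) := by rw [h1.sup_eq_top, inf_top_eq]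
          _ = (z₂ ⊓ c) ⊔ (z₂ ⊓ z₁) := hdist z₂ ⟨c, h2.symm⟩ c ⟨z₂, h2⟩ z₁ ⟨c, h1.symm⟩
          _ = z₂ ⊓ z₁ := by rw [h2.symm.inf_eq_bot, bot_sup_eq]
      exact le_antisymm (by rw [e1]; exact inf_le_right) (by rw [e2]; exact inf_le_right)
    have hd1 : (δ ⊤ ⊔ linKer ε) ⊓ ε ⊤ = ε ⊤ ⊓ δ ⊤ := by
      rw [inf_comm,
        hdist (ε ⊤) ⟨linKer ε, hcε.symm⟩ (δ ⊤) ⟨linKer δ, hcδ.symm⟩ (linKer ε) ⟨ε ⊤, hcε⟩,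
        hcε.symm.inf_eq_bot, sup_bot_eq]
    have hd2 : (ε ⊤ ⊔ linKer δ) ⊓ δ ⊤ = δ ⊤ ⊓ ε ⊤ := by
      rw [inf_comm,
        hdist (δ ⊤) ⟨linKer δ, hcδ.symm⟩ (ε ⊤) ⟨linKer ε, hcε.symm⟩ (linKer δ) ⟨δ ⊤, hcδ⟩,
        hcδ.symm.inf_eq_bot, sup_bot_eq]
    obtain ⟨hidm1, htop1⟩ := comp_idem hcε hfε hcδ hfδ hd1
    obtain ⟨hidm2, htop2⟩ := comp_idem hcδ hfδ hcε hfε hd2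
    have hm1 : ε ∘ δ ∈ M := hM.comp_mem ε hε δ hδ
    have hm2 : δ ∘ ε ∈ M := hM.comp_mem δ hδ ε hε
    obtain ⟨hc1, hf1⟩ := idem_struct (hM.lin_mem _ hm1) hidm1
    obtain ⟨hc2, hf2⟩ := idem_struct (hM.lin_mem _ hm2) hidm2
    rw [htop1] at hc1 hf1
    rw [htop2] at hc2 hf2
    have hcm : δ ⊤ ⊓ ε ⊤ = ε ⊤ ⊓ δ ⊤ := inf_comm _ _
    rw [hcm] at hc2 hf2
    have hkk : linKer (ε ∘ δ) = linKer (δ ∘ ε) := cuniq hc1.symm hc2.symm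
    funext b
    rw [hf1 b, hf2 b, hkk]
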